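/- (Corollary 4 of the paper.) In the CBwK setting, suppose min B > 0 and there exists a null-cost action a₀ ∈ A with c(x,a₀) = 0 for all x ∈ X. Then for every b ∈ [0, (min B)/2], any minimizer λ*_{B−b·1} of λ ↦ L(λ, B−b·1) over λ ∈ [0,∞)^d satisfies ‖λ*_{B−b·1}‖ ≤ 2 ( OPT(r,c,B) − OPT(r,c,0) ) / min B, where ‖·‖ is the Euclidean norm and 0 denotes the zero vector of cost constraints. -/

import Mathlib

open MeasureTheory Finset

namespace CBwK

variable {X : Type*} [MeasurableSpace X] {A : Type*} [Fintype A] [Nonempty A] {d : ℕ}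

/-- A static policy: a measurable map `X → P(A)` with components `(π_a)_{a∈A}`. -/
def IsPolicy (π : X → A → ℝ) : Prop :=
  (∀ x a, 0 ≤ π x a) ∧ (∀ x, ∑ a, π x a = 1) ∧ (∀ a, Measurable fun x => π x a)

/-- Expected reward `E_{X∼ν}[Σ_a r(X,a) π_a(X)]` of a policy. -/
noncomputable def polReward (ν : Measure X) (r : X → A → ℝ) (π : X → A → ℝ) : ℝ :=
  ∫ x, ∑ a, r x a * π x a ∂ν

/-- Component `i` of the expected cost vector `E_{X∼ν}[Σ_a c(X,a) π_a(X)]` of a policy. -/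
noncomputable def polCost (ν : Measure X) (c : X → A → Fin d → ℝ) (π : X → A → ℝ)
    (i : Fin d) : ℝ :=
  ∫ x, ∑ a, c x a i * π x a ∂ν

/-- The problem `(r,c,B',ν)` is feasible. -/
def Feasible (ν : Measure X) (c : X → A → Fin d → ℝ) (B' : Fin d → ℝ) : Prop :=
  ∃ π, IsPolicy π ∧ ∀ i, polCost ν c π i ≤ B' i

/-- `OPT(r,c,B')`: optimal expected reward under the expected-cost constraints `B'`. -/
noncomputable def OPT (ν : Measure X) (r : X → A → ℝ) (c : X → A → Fin d → ℝ)
    (B' : Fin d → ℝ) : ℝ :=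
  sSup {y : ℝ | ∃ π, IsPolicy π ∧ (∀ i, polCost ν c π i ≤ B' i) ∧ y = polReward ν r π}

/-- `L(λ,C) = E_{X∼ν}[ max_a { r(X,a) − ⟨c(X,a) − C, λ⟩ } ]`. -/
noncomputable def L (ν : Measure X) (r : X → A → ℝ) (c : X → A → Fin d → ℝ)
    (lam : Fin d → ℝ) (C : Fin d → ℝ) : ℝ :=
  ∫ x, Finset.univ.sup' Finset.univ_nonempty
    (fun a => r x a - ∑ i, (c x a i - C i) * lam i) ∂ν

/-- Euclidean norm on `ℝ^d`. -/
noncomputable def enorm (v : Fin d → ℝ) : ℝ := Real.sqrt (∑ i, (v i) ^ 2)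

/-- ℓ1-norm on `ℝ^d`. -/
noncomputable def l1norm (v : Fin d → ℝ) : ℝ := ∑ i, |v i|

/-- Smallest component of a vector of `ℝ^d` (junk value `0` if `d = 0`). -/
noncomputable def minComp (v : Fin d → ℝ) : ℝ := ⨅ i, v i


set_option linter.unusedSectionVars false

section Aux
open scoped Classical

variable {X : Type*} [MeasurableSpace X] {A : Type*} [Fintype A] [Nonempty A] {d : ℕ}

/-- Integrand of `L` as a function of the action. -/
noncomputable def phi (r : X → A → ℝ) (c : X → A → Fin d → ℝ) (C lam : Fin d → ℝ)
    (x : X) (a : A) : ℝ := r x a - ∑ i, (c x a i - C i) * lam i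

/-- Pointwise max over actions. -/
noncomputable def Mx (r : X → A → ℝ) (c : X → A → Fin d → ℝ) (C lam : Fin d → ℝ)
    (x : X) : ℝ := Finset.univ.sup' Finset.univ_nonempty (phi r c C lam x)

/-- Directional slope. -/
noncomputable def slope (c : X → A → Fin d → ℝ) (C v : Fin d → ℝ) (x : X) (a : A) : ℝ :=
  ∑ i, (C i - c x a i) * v i

lemma L_eq (ν : Measure X) (r : X → A → ℝ) (c : X → A → Fin d → ℝ) (lam C : Fin d → ℝ) :
    L ν r c lam C = ∫ x, Mx r c C lam x ∂ν := rfl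

lemma phi_shift (r : X → A → ℝ) (c : X → A → Fin d → ℝ) (C lam v : Fin d → ℝ) (t : ℝ)
    (x : X) (a : A) :
    phi r c C (fun i => lam i + t * v i) x a = phi r c C lam x a + t * slope c C v x a := by
  have h : ∑ i, (c x a i - C i) * (lam i + t * v i)
      = ∑ i, ((c x a i - C i) * lam i - t * ((C i - c x a i) * v i)) :=
    Finset.sum_congr rfl fun i _ => by ring
  simp only [phi, slope, h, Finset.sum_sub_distrib, ← Finset.mul_sum]
  ring

variable {ν : Measure X} [IsProbabilityMeasure ν]
  {r : X → A → ℝ} {c : X → A → Fin d → ℝ}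

section Bounds

variable (hr : ∀ x a, r x a ∈ Set.Icc (0 : ℝ) 1) (hc : ∀ x a i, c x a i ∈ Set.Icc (-1 : ℝ) 1)
  (hrm : ∀ a, Measurable fun x => r x a) (hcm : ∀ a i, Measurable fun x => c x a i)

/-- generic bound for ∑ᵢ (αᵢ ± cᵢ) * βᵢ with |c| ≤ 1 -/
lemma slope_abs_le (hc : ∀ x a i, c x a i ∈ Set.Icc (-1 : ℝ) 1) (C v : Fin d → ℝ) (x : X)
    (a : A) : |slope c C v x a| ≤ ∑ i, (1 + |C i|) * |v i| := by
  refine (Finset.abs_sum_le_sum_abs _ _).trans (Finset.sum_le_sum fun i _ => ?_)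
  rw [abs_mul]
  have h1 : |C i - c x a i| ≤ 1 + |C i| := by
    have := (hc x a i).1; have := (hc x a i).2
    rw [abs_sub_comm]
    calc |c x a i - C i| ≤ |c x a i| + |C i| := abs_sub _ _
      _ ≤ 1 + |C i| := by
        have : |c x a i| ≤ 1 := abs_le.2 ⟨(hc x a i).1, (hc x a i).2⟩
        linarith
  exact mul_le_mul_of_nonneg_right h1 (abs_nonneg _)

lemma phi_abs_le (hr : ∀ x a, r x a ∈ Set.Icc (0 : ℝ) 1)
    (hc : ∀ x a i, c x a i ∈ Set.Icc (-1 : ℝ) 1) (C lam : Fin d → ℝ) (x : X) (a : A) :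
    |phi r c C lam x a| ≤ 1 + ∑ i, (1 + |C i|) * |lam i| := by
  have h : phi r c C lam x a = r x a + slope c C lam x a := by
    simp only [phi, slope]
    rw [sub_eq_add_neg, ← Finset.sum_neg_distrib]
    congr 1
    exact Finset.sum_congr rfl fun i _ => by ring
  rw [h]
  calc |r x a + slope c C lam x a| ≤ |r x a| + |slope c C lam x a| := abs_add_le _ _
    _ ≤ 1 + ∑ i, (1 + |C i|) * |lam i| := by
      have h1 : |r x a| ≤ 1 := abs_le.2 ⟨by linarith [(hr x a).1], (hr x a).2⟩
      have h2 := slope_abs_le hc C lam x a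
      linarith

lemma Mx_abs_le (hr : ∀ x a, r x a ∈ Set.Icc (0 : ℝ) 1)
    (hc : ∀ x a i, c x a i ∈ Set.Icc (-1 : ℝ) 1) (C lam : Fin d → ℝ) (x : X) :
    |Mx r c C lam x| ≤ 1 + ∑ i, (1 + |C i|) * |lam i| := by
  rw [abs_le]
  constructor
  · obtain ⟨a⟩ := (inferInstance : Nonempty A)
    refine le_trans ?_ (Finset.le_sup' (phi r c C lam x) (Finset.mem_univ a))
    linarith [abs_le.1 (phi_abs_le hr hc C lam x a) |>.1]
  · exact Finset.sup'_le _ _ fun a _ => (abs_le.1 (phi_abs_le hr hc C lam x a)).2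

lemma measurable_phi (hrm : ∀ a, Measurable fun x => r x a)
    (hcm : ∀ a i, Measurable fun x => c x a i) (C lam : Fin d → ℝ) (a : A) :
    Measurable fun x => phi r c C lam x a := by
  apply (hrm a).sub
  exact Finset.measurable_sum _ fun i _ => ((hcm a i).sub measurable_const).mul measurable_const

lemma measurable_slope (hcm : ∀ a i, Measurable fun x => c x a i) (C v : Fin d → ℝ) (a : A) :
    Measurable fun x => slope c C v x a :=
  Finset.measurable_sum _ fun i _ => (measurable_const.sub (hcm a i)).mul measurable_const

lemma measurable_Mx (hrm : ∀ a, Measurable fun x => r x a)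
    (hcm : ∀ a i, Measurable fun x => c x a i) (C lam : Fin d → ℝ) :
    Measurable fun x => Mx r c C lam x := by
  have : (fun x => Mx r c C lam x)
      = Finset.univ.sup' Finset.univ_nonempty (fun a x => phi r c C lam x a) := by
    funext x
    rw [Finset.sup'_apply]
    rfl
  rw [this]
  exact Finset.measurable_sup' _ fun a _ => measurable_phi hrm hcm C lam a

/-- Bounded measurable functions are integrable against a probability measure. -/
lemma integrable_of_bound {f : X → ℝ} (hm : Measurable f) (K : ℝ) (hK : ∀ x, |f x| ≤ K) :
    Integrable f ν := by
  refine Integrable.mono' (integrable_const K) hm.aestronglyMeasurable ?_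
  exact Filter.Eventually.of_forall fun x => by simpa [Real.norm_eq_abs] using hK x

lemma integrable_Mx (hr : ∀ x a, r x a ∈ Set.Icc (0 : ℝ) 1)
    (hc : ∀ x a i, c x a i ∈ Set.Icc (-1 : ℝ) 1)
    (hrm : ∀ a, Measurable fun x => r x a)
    (hcm : ∀ a i, Measurable fun x => c x a i) (C lam : Fin d → ℝ) :
    Integrable (fun x => Mx r c C lam x) ν :=
  integrable_of_bound (measurable_Mx hrm hcm C lam) _ (Mx_abs_le hr hc C lam)

end Bounds

section Policy

variable {π : X → A → ℝ}

lemma sum_indicator_mul (h : X → A → ℝ) (a₀ : A) (x : X) :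
    ∑ a, h x a * (if a₀ = a then (1:ℝ) else 0) = h x a₀ := by
  rw [Finset.sum_eq_single a₀]
  · rw [if_pos rfl, mul_one]
  · intro b _ hb
    rw [if_neg (Ne.symm hb), mul_zero]
  · intro h
    exact absurd (Finset.mem_univ a₀) h

lemma integrable_polsum (hπ : IsPolicy π) (h : X → A → ℝ)
    (hm : ∀ a, Measurable fun x => h x a) (K : ℝ) (hK : ∀ x a, |h x a| ≤ K) :
    Integrable (fun x => ∑ a, h x a * π x a) ν := by
  refine integrable_of_bound ?_ K ?_
  · exact Finset.measurable_sum _ fun a _ => (hm a).mul (hπ.2.2 a)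
  · intro x
    calc |∑ a, h x a * π x a| ≤ ∑ a, |h x a * π x a| := Finset.abs_sum_le_sum_abs _ _
      _ ≤ ∑ a, K * π x a := Finset.sum_le_sum fun a _ => by
          rw [abs_mul, abs_of_nonneg (hπ.1 x a)]
          exact mul_le_mul_of_nonneg_right (hK x a) (hπ.1 x a)
      _ = K := by rw [← Finset.mul_sum, hπ.2.1 x, mul_one]

lemma pointwise_identity (C lam : Fin d → ℝ) (x : X) (hπsum : ∑ a, π x a = 1) :
    ∑ a, π x a * phi r c C lam x a
      = ∑ a, r x a * π x a + ∑ i, lam i * (C i - ∑ a, c x a i * π x a) := by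
  have h1 : ∑ a, π x a * phi r c C lam x a
      = ∑ a, r x a * π x a - ∑ a, ∑ i, π x a * ((c x a i - C i) * lam i) := by
    simp only [phi, mul_sub, Finset.sum_sub_distrib, Finset.mul_sum]
    congr 1
    exact Finset.sum_congr rfl fun a _ => by ring
  have h2 : ∀ i, ∑ a, π x a * ((c x a i - C i) * lam i)
      = lam i * (∑ a, c x a i * π x a) - lam i * C i * (∑ a, π x a) := by
    intro i
    rw [Finset.mul_sum, Finset.mul_sum, ← Finset.sum_sub_distrib]
    exact Finset.sum_congr rfl fun a _ => by ring
  rw [h1, Finset.sum_comm]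
  rw [Finset.sum_congr rfl fun i _ => h2 i]
  rw [Finset.sum_sub_distrib, Finset.sum_congr rfl fun i (_ : i ∈ Finset.univ) =>
    (by rw [hπsum, mul_one] : lam i * C i * (∑ a, π x a) = lam i * C i)]
  have : ∑ i, lam i * (C i - ∑ a, c x a i * π x a)
      = ∑ i, (lam i * C i - lam i * (∑ a, c x a i * π x a)) :=
    Finset.sum_congr rfl fun i _ => by ring
  rw [this, Finset.sum_sub_distrib]
  ring

lemma integrable_costfun (hc : ∀ x a i, c x a i ∈ Set.Icc (-1 : ℝ) 1)
    (hcm : ∀ a i, Measurable fun x => c x a i) (hπ : IsPolicy π) (i : Fin d) :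
    Integrable (fun x => ∑ a, c x a i * π x a) ν :=
  integrable_polsum hπ _ (fun a => hcm a i) 1
    (fun x a => abs_le.2 ⟨(hc x a i).1, (hc x a i).2⟩)

lemma integrable_rewfun (hr : ∀ x a, r x a ∈ Set.Icc (0 : ℝ) 1)
    (hrm : ∀ a, Measurable fun x => r x a) (hπ : IsPolicy π) :
    Integrable (fun x => ∑ a, r x a * π x a) ν :=
  integrable_polsum hπ _ hrm 1
    (fun x a => abs_le.2 ⟨by linarith [(hr x a).1], (hr x a).2⟩)

lemma integral_policy_phi (hr : ∀ x a, r x a ∈ Set.Icc (0 : ℝ) 1)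
    (hc : ∀ x a i, c x a i ∈ Set.Icc (-1 : ℝ) 1)
    (hrm : ∀ a, Measurable fun x => r x a)
    (hcm : ∀ a i, Measurable fun x => c x a i)
    (hπ : IsPolicy π) (C lam : Fin d → ℝ) :
    ∫ x, ∑ a, π x a * phi r c C lam x a ∂ν
      = polReward ν r π + ∑ i, lam i * (C i - polCost ν c π i) := by
  have heq : (fun x => ∑ a, π x a * phi r c C lam x a)
      = fun x => (∑ a, r x a * π x a) + ∑ i, lam i * (C i - ∑ a, c x a i * π x a) :=
    funext fun x => pointwise_identity C lam x (hπ.2.1 x)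
  rw [heq]
  have hint2 : ∀ i : Fin d,
      Integrable (fun x => lam i * (C i - ∑ a, c x a i * π x a)) ν :=
    fun i => ((integrable_const (C i)).sub (integrable_costfun hc hcm hπ i)).const_mul _
  rw [integral_add (integrable_rewfun hr hrm hπ) (integrable_finset_sum _ fun i _ => hint2 i),
    integral_finset_sum _ fun i _ => hint2 i]
  unfold polReward polCost
  congr 1
  refine Finset.sum_congr rfl fun i _ => ?_
  rw [integral_const_mul, integral_sub (integrable_const _) (integrable_costfun hc hcm hπ i)]
  simp

lemma policy_phi_le_Mx (hπ : IsPolicy π) (C lam : Fin d → ℝ) (x : X) :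
    ∑ a, π x a * phi r c C lam x a ≤ Mx r c C lam x := by
  calc ∑ a, π x a * phi r c C lam x a ≤ ∑ a, π x a * Mx r c C lam x :=
      Finset.sum_le_sum fun a _ => mul_le_mul_of_nonneg_left
        (Finset.le_sup' (phi r c C lam x) (Finset.mem_univ a)) (hπ.1 x a)
    _ = Mx r c C lam x := by rw [← Finset.sum_mul, hπ.2.1 x, one_mul]

lemma weak_duality (hr : ∀ x a, r x a ∈ Set.Icc (0 : ℝ) 1)
    (hc : ∀ x a i, c x a i ∈ Set.Icc (-1 : ℝ) 1)
    (hrm : ∀ a, Measurable fun x => r x a)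
    (hcm : ∀ a i, Measurable fun x => c x a i)
    (hπ : IsPolicy π) (C lam : Fin d → ℝ) :
    polReward ν r π + ∑ i, lam i * (C i - polCost ν c π i) ≤ L ν r c lam C := by
  rw [← integral_policy_phi hr hc hrm hcm hπ C lam, L_eq]
  refine integral_mono ?_ (integrable_Mx hr hc hrm hcm C lam)
    (fun x => policy_phi_le_Mx hπ C lam x)
  have : (fun x => ∑ a, π x a * phi r c C lam x a)
      = fun x => ∑ a, phi r c C lam x a * π x a :=
    funext fun x => Finset.sum_congr rfl fun a _ => mul_comm _ _
  rw [this]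
  exact integrable_polsum hπ _ (measurable_phi hrm hcm C lam) _ (phi_abs_le hr hc C lam)

lemma support_duality (hr : ∀ x a, r x a ∈ Set.Icc (0 : ℝ) 1)
    (hc : ∀ x a i, c x a i ∈ Set.Icc (-1 : ℝ) 1)
    (hrm : ∀ a, Measurable fun x => r x a)
    (hcm : ∀ a i, Measurable fun x => c x a i)
    (hπ : IsPolicy π) (C lam : Fin d → ℝ)
    (hsupp : ∀ x a, π x a ≠ 0 → phi r c C lam x a = Mx r c C lam x) :
    polReward ν r π + ∑ i, lam i * (C i - polCost ν c π i) = L ν r c lam C := by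
  rw [← integral_policy_phi hr hc hrm hcm hπ C lam, L_eq]
  congr 1
  funext x
  calc ∑ a, π x a * phi r c C lam x a = ∑ a, π x a * Mx r c C lam x := by
        refine Finset.sum_congr rfl fun a _ => ?_
        by_cases h : π x a = 0
        · rw [h, zero_mul, zero_mul]
        · rw [hsupp x a h]
    _ = Mx r c C lam x := by rw [← Finset.sum_mul, hπ.2.1 x, one_mul]

lemma polReward_le_one (hr : ∀ x a, r x a ∈ Set.Icc (0 : ℝ) 1)
    (hrm : ∀ a, Measurable fun x => r x a) (hπ : IsPolicy π) :
    polReward ν r π ≤ 1 := by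
  have h1 : polReward ν r π ≤ ∫ _x, (1:ℝ) ∂ν := by
    refine integral_mono (integrable_rewfun hr hrm hπ) (integrable_const 1) (fun x => ?_)
    calc ∑ a, r x a * π x a ≤ ∑ a, 1 * π x a :=
        Finset.sum_le_sum fun a _ => mul_le_mul_of_nonneg_right ((hr x a).2) (hπ.1 x a)
      _ = 1 := by simp only [one_mul]; exact hπ.2.1 x
  simpa using h1

lemma bddAbove_rewards (hr : ∀ x a, r x a ∈ Set.Icc (0 : ℝ) 1)
    (hrm : ∀ a, Measurable fun x => r x a) (B' : Fin d → ℝ) :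
    BddAbove {y : ℝ | ∃ π, IsPolicy π ∧ (∀ i, polCost ν c π i ≤ B' i) ∧ y = polReward ν r π} := by
  refine ⟨1, fun y hy => ?_⟩
  obtain ⟨π, hπ, -, rfl⟩ := hy
  exact polReward_le_one hr hrm hπ

lemma le_OPT (hr : ∀ x a, r x a ∈ Set.Icc (0 : ℝ) 1)
    (hrm : ∀ a, Measurable fun x => r x a) (B' : Fin d → ℝ)
    (hπ : IsPolicy π) (hfeas : ∀ i, polCost ν c π i ≤ B' i) :
    polReward ν r π ≤ OPT ν r c B' :=
  le_csSup (bddAbove_rewards hr hrm B') ⟨π, hπ, hfeas, rfl⟩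

/-- The pure policy playing the null-cost action. -/
noncomputable def nullPol (a₀ : A) : X → A → ℝ := fun _ a => if a₀ = a then 1 else 0

lemma isPolicy_nullPol (a₀ : A) : IsPolicy (nullPol (X := X) a₀) := by
  refine ⟨fun x a => ?_, fun x => ?_, fun a => ?_⟩
  · unfold nullPol; split <;> norm_num
  · simp [nullPol]
  · exact measurable_const

lemma polCost_nullPol (a₀ : A) (hnull : ∀ (x : X) i, c x a₀ i = 0) (i : Fin d) :
    polCost ν c (nullPol a₀) i = 0 := by
  unfold polCost nullPol
  have : (fun x => ∑ a, c x a i * (if a₀ = a then (1:ℝ) else 0)) = fun _ => (0:ℝ) := by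
    funext x
    rw [sum_indicator_mul (fun x a => c x a i) a₀ x, hnull x i]
  rw [this]
  simp

lemma polReward_nullPol_nonneg (hr : ∀ x a, r x a ∈ Set.Icc (0 : ℝ) 1) (a₀ : A) :
    0 ≤ polReward ν r (nullPol a₀) := by
  unfold polReward
  refine integral_nonneg fun x => ?_
  refine Finset.sum_nonneg fun a _ => ?_
  have := (hr x a).1
  unfold nullPol
  split <;> nlinarith

end Policy

section Selection

variable (F S : X → A → ℝ)

/-- Lexicographic argmax predicate: `a` maximizes `F x ·`, and among maximizers of `F x ·`
it maximizes `S x ·`. -/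
def Qsel (x : X) (a : A) : Prop :=
  (∀ a', F x a' ≤ F x a) ∧ ∀ a', (∀ a'', F x a'' ≤ F x a') → S x a' ≤ S x a

lemma exists_Qsel (x : X) : ∃ a, Qsel F S x a := by
  obtain ⟨a₁, -, h₁⟩ := Finset.exists_max_image Finset.univ (F x)
    ⟨Classical.arbitrary A, Finset.mem_univ _⟩
  have h₁' : ∀ a', F x a' ≤ F x a₁ := fun a' => h₁ a' (Finset.mem_univ a')
  set T : Finset A := Finset.univ.filter (fun a => ∀ a', F x a' ≤ F x a) with hT
  have hTne : T.Nonempty := ⟨a₁, Finset.mem_filter.2 ⟨Finset.mem_univ _, h₁'⟩⟩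
  obtain ⟨a₂, ha₂T, h₂⟩ := Finset.exists_max_image T (S x) hTne
  refine ⟨a₂, (Finset.mem_filter.1 ha₂T).2, fun a' ha' => ?_⟩
  exact h₂ a' (Finset.mem_filter.2 ⟨Finset.mem_univ _, ha'⟩)

lemma measurableSet_Qsel (hF : ∀ a, Measurable fun x => F x a)
    (hS : ∀ a, Measurable fun x => S x a) (a : A) :
    MeasurableSet {x | Qsel F S x a} := by
  have hkey : {x | Qsel F S x a} = (⋂ a', {x | F x a' ≤ F x a}) ∩
      ⋂ a', ((⋂ a'', {x | F x a'' ≤ F x a'})ᶜ ∪ {x | S x a' ≤ S x a}) := by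
    ext x
    simp only [Qsel, Set.mem_setOf_eq, Set.mem_inter_iff, Set.mem_iInter, Set.mem_union,
      Set.mem_compl_iff]
    constructor
    · rintro ⟨h1, h2⟩
      refine ⟨h1, fun a' => ?_⟩
      by_cases h : ∀ a'', F x a'' ≤ F x a'
      · exact Or.inr (h2 a' h)
      · exact Or.inl h
    · rintro ⟨h1, h2⟩
      refine ⟨h1, fun a' ha' => ?_⟩
      rcases h2 a' with h | h
      · exact absurd ha' h
      · exact h
  rw [hkey]
  refine MeasurableSet.inter (MeasurableSet.iInter fun a' => measurableSet_le (hF a') (hF a)) ?_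
  refine MeasurableSet.iInter fun a' => MeasurableSet.union ?_ (measurableSet_le (hS a') (hS a))
  exact (MeasurableSet.iInter fun a'' => measurableSet_le (hF a'') (hF a')).compl

lemma QselFinset_nonempty (x : X) :
    ((Finset.univ.filter (fun a => Qsel F S x a)).image (Fintype.equivFin A)).Nonempty := by
  obtain ⟨a, ha⟩ := exists_Qsel F S x
  exact ⟨Fintype.equivFin A a, Finset.mem_image_of_mem _
    (Finset.mem_filter.2 ⟨Finset.mem_univ _, ha⟩)⟩

/-- The canonical lexicographic-argmax selection. -/
noncomputable def sel (x : X) : A :=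
  (Fintype.equivFin A).symm
    (Finset.min' _ (QselFinset_nonempty F S x))

lemma sel_eq_iff (x : X) (a : A) :
    sel F S x = a ↔ Qsel F S x a ∧
      ∀ b, Qsel F S x b → Fintype.equivFin A a ≤ Fintype.equivFin A b := by
  set e := Fintype.equivFin A
  set T := (Finset.univ.filter (fun a => Qsel F S x a)).image e with hT
  have hmem : ∀ k, k ∈ T ↔ Qsel F S x (e.symm k) := by
    intro k
    simp only [hT, Finset.mem_image, Finset.mem_filter, Finset.mem_univ, true_and]
    constructor
    · rintro ⟨b, hb, rfl⟩; simpa using hb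
    · intro h; exact ⟨e.symm k, h, by simp⟩
  constructor
  · rintro rfl
    have h1 : Finset.min' T (QselFinset_nonempty F S x) ∈ T := Finset.min'_mem _ _
    refine ⟨(hmem _).1 h1, fun b hb => ?_⟩
    have h2 : e b ∈ T := (hmem (e b)).2 (by simpa using hb)
    have := Finset.min'_le T (e b) h2
    show e (e.symm (T.min' (QselFinset_nonempty F S x))) ≤ e b
    rw [Equiv.apply_symm_apply]; exact this
  · rintro ⟨h1, h2⟩
    have hEa : e a ∈ T := (hmem (e a)).2 (by simpa using h1)
    have hmin : Finset.min' T (QselFinset_nonempty F S x) = e a := by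
      refine le_antisymm (Finset.min'_le T (e a) hEa) ?_
      have h3 := Finset.min'_mem T (QselFinset_nonempty F S x)
      have := h2 _ ((hmem _).1 h3)
      simpa using this
    show e.symm (T.min' (QselFinset_nonempty F S x)) = a
    rw [hmin]; simp

lemma Qsel_sel (x : X) : Qsel F S x (sel F S x) := ((sel_eq_iff F S x _).1 rfl).1

lemma measurableSet_sel_eq (hF : ∀ a, Measurable fun x => F x a)
    (hS : ∀ a, Measurable fun x => S x a) (a : A) :
    MeasurableSet {x | sel F S x = a} := by
  have hkey : {x | sel F S x = a} = {x | Qsel F S x a} ∩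
      ⋂ b, {x | Qsel F S x b → Fintype.equivFin A a ≤ Fintype.equivFin A b} := by
    ext x
    simp only [Set.mem_setOf_eq, Set.mem_inter_iff, Set.mem_iInter, sel_eq_iff]
  rw [hkey]
  refine (measurableSet_Qsel F S hF hS a).inter (MeasurableSet.iInter fun b => ?_)
  by_cases h : Fintype.equivFin A a ≤ Fintype.equivFin A b
  · have : {x | Qsel F S x b → Fintype.equivFin A a ≤ Fintype.equivFin A b} = Set.univ := by
      ext x; simp [h]
    rw [this]; exact MeasurableSet.univ
  · have : {x | Qsel F S x b → Fintype.equivFin A a ≤ Fintype.equivFin A b}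
        = {x | Qsel F S x b}ᶜ := by
      ext x; simp [h]
    rw [this]; exact (measurableSet_Qsel F S hF hS b).compl

/-- The pure policy induced by the selection. -/
noncomputable def selPol (x : X) (a : A) : ℝ := if sel F S x = a then 1 else 0

lemma isPolicy_selPol (hF : ∀ a, Measurable fun x => F x a)
    (hS : ∀ a, Measurable fun x => S x a) : IsPolicy (selPol F S) := by
  refine ⟨fun x a => ?_, fun x => ?_, fun a => ?_⟩
  · unfold selPol; split <;> norm_num
  · unfold selPol
    rw [Finset.sum_eq_single (sel F S x)]
    · rw [if_pos rfl]
    · intro b _ hb; rw [if_neg (Ne.symm hb)]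
    · intro h; exact absurd (Finset.mem_univ _) h
  · exact Measurable.ite (measurableSet_sel_eq F S hF hS a) measurable_const measurable_const

lemma sum_selPol_mul (h : X → A → ℝ) (x : X) :
    ∑ a, h x a * selPol F S x a = h x (sel F S x) := by
  unfold selPol
  exact sum_indicator_mul h (sel F S x) x

end Selection

section Directional

variable (hr : ∀ x a, r x a ∈ Set.Icc (0 : ℝ) 1) (hc : ∀ x a i, c x a i ∈ Set.Icc (-1 : ℝ) 1)

lemma slope_bound_nonneg (C v : Fin d → ℝ) : (0:ℝ) ≤ ∑ i, (1 + |C i|) * |v i| :=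
  Finset.sum_nonneg fun i _ => mul_nonneg (by positivity) (abs_nonneg _)

lemma phi_sel_eq_Mx (C lam v : Fin d → ℝ) (x : X) :
    phi r c C lam x (sel (phi r c C lam) (slope c C v) x) = Mx r c C lam x := by
  have hQ := Qsel_sel (phi r c C lam) (slope c C v) x
  exact le_antisymm (Finset.le_sup' _ (Finset.mem_univ _)) (Finset.sup'_le _ _ fun a _ => hQ.1 a)

lemma exists_t0 (hc : ∀ x a i, c x a i ∈ Set.Icc (-1 : ℝ) 1) (C lam v : Fin d → ℝ) (x : X) :
    ∃ t0 : ℝ, 0 < t0 ∧ ∀ t : ℝ, 0 < t → t ≤ t0 →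
      Mx r c C (fun i => lam i + t * v i) x
        = Mx r c C lam x + t * slope c C v x (sel (phi r c C lam) (slope c C v) x) := by
  classical
  set σ := sel (phi r c C lam) (slope c C v) x with hσ
  set m := Mx r c C lam x with hm
  set Sb := ∑ i, (1 + |C i|) * |v i| with hSb
  have hSb0 : (0:ℝ) ≤ Sb := slope_bound_nonneg C v
  have hQ := Qsel_sel (phi r c C lam) (slope c C v) x
  have hφσ : phi r c C lam x σ = m := phi_sel_eq_Mx C lam v x
  have hsσ : |slope c C v x σ| ≤ Sb := slope_abs_le hc C v x σ
  have hφle : ∀ a, phi r c C lam x a ≤ m :=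
    fun a => Finset.le_sup' (phi r c C lam x) (Finset.mem_univ a)
  set G : Finset A := Finset.univ.filter (fun a => phi r c C lam x a < m) with hG
  have main : ∀ t0 : ℝ, 0 < t0 → (∀ a ∈ G, t0 * (2 * Sb + 1) ≤ m - phi r c C lam x a) →
      ∀ t : ℝ, 0 < t → t ≤ t0 →
      Mx r c C (fun i => lam i + t * v i) x = m + t * slope c C v x σ := by
    intro t0 ht0 ht0G t ht htle
    have hexp : ∀ a, phi r c C (fun i => lam i + t * v i) x a
        = phi r c C lam x a + t * slope c C v x a := fun a => phi_shift r c C lam v t x a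
    have hup : Mx r c C (fun i => lam i + t * v i) x ≤ m + t * slope c C v x σ := by
      refine Finset.sup'_le _ _ fun a _ => ?_
      rw [hexp a]
      by_cases ha : ∀ a', phi r c C lam x a' ≤ phi r c C lam x a
      · have h1 : slope c C v x a ≤ slope c C v x σ := hQ.2 a ha
        have h2 : phi r c C lam x a ≤ m := hφle a
        nlinarith
      · have haG : a ∈ G := by
          push_neg at ha
          obtain ⟨a', ha'⟩ := ha
          exact Finset.mem_filter.2 ⟨Finset.mem_univ _, lt_of_lt_of_le ha' (hφle a')⟩
        have h3 := ht0G a haG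
        have h4 : |slope c C v x a| ≤ Sb := slope_abs_le hc C v x a
        have h5 := abs_le.1 h4
        have h6 := abs_le.1 hsσ
        nlinarith
    have hlo : m + t * slope c C v x σ ≤ Mx r c C (fun i => lam i + t * v i) x := by
      have := Finset.le_sup' (phi r c C (fun i => lam i + t * v i) x) (Finset.mem_univ σ)
      rw [hexp σ, hφσ] at this
      exact this
    exact le_antisymm hup hlo
  by_cases hGne : G.Nonempty
  · set γ := G.inf' hGne (fun a => m - phi r c C lam x a) with hγ
    have hγpos : 0 < γ := by
      rw [hγ, Finset.lt_inf'_iff]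
      intro a ha
      have := (Finset.mem_filter.1 ha).2
      linarith
    refine ⟨γ / (2 * Sb + 1), by positivity, ?_⟩
    refine main _ (by positivity) (fun a ha => ?_)
    have h1 : γ ≤ m - phi r c C lam x a := Finset.inf'_le _ ha
    have h2 : γ / (2 * Sb + 1) * (2 * Sb + 1) = γ := by field_simp
    linarith
  · refine ⟨1, one_pos, ?_⟩
    refine main 1 one_pos (fun a ha => absurd ⟨a, ha⟩ hGne)

lemma Mx_shift_abs_le (hr : ∀ x a, r x a ∈ Set.Icc (0 : ℝ) 1)
    (hc : ∀ x a i, c x a i ∈ Set.Icc (-1 : ℝ) 1) (C lam v : Fin d → ℝ)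
    (x : X) (t : ℝ) (ht : 0 ≤ t) :
    |Mx r c C (fun i => lam i + t * v i) x - Mx r c C lam x| ≤ t * ∑ i, (1 + |C i|) * |v i| := by
  set Sb := ∑ i, (1 + |C i|) * |v i| with hSb
  have hexp : ∀ a, phi r c C (fun i => lam i + t * v i) x a
      = phi r c C lam x a + t * slope c C v x a := fun a => phi_shift r c C lam v t x a
  have habs : ∀ a, |slope c C v x a| ≤ Sb := fun a => slope_abs_le hc C v x a
  rw [abs_le]
  constructor
  · obtain ⟨a, -, hsup⟩ := Finset.exists_mem_eq_sup' Finset.univ_nonempty (phi r c C lam x)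
    have h1 : phi r c C lam x a + t * slope c C v x a
        ≤ Mx r c C (fun i => lam i + t * v i) x := by
      rw [← hexp a]
      exact Finset.le_sup' _ (Finset.mem_univ a)
    have h2 := abs_le.1 (habs a)
    have h3 : Mx r c C lam x = phi r c C lam x a := hsup
    nlinarith
  · have h1 : Mx r c C (fun i => lam i + t * v i) x ≤ Mx r c C lam x + t * Sb := by
      refine Finset.sup'_le _ _ fun a _ => ?_
      rw [hexp a]
      have h2 := abs_le.1 (habs a)
      have h3 : phi r c C lam x a ≤ Mx r c C lam x := Finset.le_sup' _ (Finset.mem_univ a)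
      nlinarith
    linarith

lemma directional (hr : ∀ x a, r x a ∈ Set.Icc (0 : ℝ) 1)
    (hc : ∀ x a i, c x a i ∈ Set.Icc (-1 : ℝ) 1)
    (hrm : ∀ a, Measurable fun x => r x a)
    (hcm : ∀ a i, Measurable fun x => c x a i)
    (C lam v : Fin d → ℝ)
    (hlam : ∀ i, 0 ≤ lam i) (hT : ∀ i, lam i = 0 → 0 ≤ v i)
    (hmin : ∀ lam', (∀ i, 0 ≤ lam' i) → L ν r c lam C ≤ L ν r c lam' C) :
    ∃ π, IsPolicy π ∧ (∀ x a, π x a ≠ 0 → phi r c C lam x a = Mx r c C lam x) ∧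
      0 ≤ ∑ i, v i * (C i - polCost ν c π i) := by
  classical
  have hFm : ∀ a, Measurable fun x => phi r c C lam x a := measurable_phi hrm hcm C lam
  have hSm : ∀ a, Measurable fun x => slope c C v x a := measurable_slope hcm C v
  set π := selPol (phi r c C lam) (slope c C v) with hπdef
  have hπ : IsPolicy π := isPolicy_selPol _ _ hFm hSm
  have hsupp : ∀ x a, π x a ≠ 0 → phi r c C lam x a = Mx r c C lam x := by
    intro x a ha
    have : sel (phi r c C lam) (slope c C v) x = a := by
      by_contra h
      exact ha (if_neg h)
    rw [← this]
    exact phi_sel_eq_Mx C lam v x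
  refine ⟨π, hπ, hsupp, ?_⟩
  set Sb := ∑ i, (1 + |C i|) * |v i| with hSb
  set g : X → ℝ := fun x => slope c C v x (sel (phi r c C lam) (slope c C v) x) with hg
  have hgsum : ∀ x, g x = ∑ a, slope c C v x a * π x a :=
    fun x => (sum_selPol_mul _ _ (slope c C v) x).symm
  set Fn : ℕ → X → ℝ := fun n x =>
    ((n:ℝ)+1) * (Mx r c C (fun i => lam i + (1/((n:ℝ)+1)) * v i) x - Mx r c C lam x) with hFn
  -- pointwise eventual equality
  have hptwise : ∀ x, ∀ᶠ n in Filter.atTop, Fn n x = g x := by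
    intro x
    obtain ⟨t0, ht0, hspec⟩ := exists_t0 hc C lam v x
    have hev : ∀ᶠ n : ℕ in Filter.atTop, 1/((n:ℝ)+1) < t0 :=
      tendsto_one_div_add_atTop_nhds_zero_nat.eventually (gt_mem_nhds ht0)
    filter_upwards [hev] with n hn
    have hne : ((n:ℝ)+1) ≠ 0 := by positivity
    have htpos : 0 < 1/((n:ℝ)+1) := by positivity
    show ((n:ℝ)+1) * (Mx r c C (fun i => lam i + (1/((n:ℝ)+1)) * v i) x - Mx r c C lam x)
      = slope c C v x (sel (phi r c C lam) (slope c C v) x)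
    rw [hspec _ htpos hn.le]
    field_simp
    ring
  -- uniform bound
  have hbound : ∀ n x, |Fn n x| ≤ Sb := by
    intro n x
    have htpos : (0:ℝ) ≤ 1/((n:ℝ)+1) := by positivity
    have h1 := Mx_shift_abs_le hr hc C lam v x (1/((n:ℝ)+1)) htpos
    rw [hFn]
    simp only
    rw [abs_mul, abs_of_nonneg (by positivity : (0:ℝ) ≤ (n:ℝ)+1)]
    calc ((n:ℝ)+1) * |Mx r c C (fun i => lam i + (1/((n:ℝ)+1)) * v i) x - Mx r c C lam x|
        ≤ ((n:ℝ)+1) * ((1/((n:ℝ)+1)) * Sb) := by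
          exact mul_le_mul_of_nonneg_left h1 (by positivity)
      _ = Sb := by field_simp
  -- dominated convergence
  have hFnmeas : ∀ n, Measurable (Fn n) := by
    intro n
    exact ((measurable_Mx hrm hcm C _).sub (measurable_Mx hrm hcm C lam)).const_mul _
  have hgmeas : Measurable g := by
    have : g = fun x => ∑ a, slope c C v x a * π x a := funext hgsum
    rw [this]
    exact Finset.measurable_sum _ fun a _ => (hSm a).mul (hπ.2.2 a)
  have htendsto : Filter.Tendsto (fun n => ∫ x, Fn n x ∂ν) Filter.atTop (nhds (∫ x, g x ∂ν)) := by
    refine tendsto_integral_of_dominated_convergence (fun _ => Sb)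
      (fun n => (hFnmeas n).aestronglyMeasurable) (integrable_const Sb) (fun n => ?_) ?_
    · exact Filter.Eventually.of_forall fun x => by
        simpa [Real.norm_eq_abs] using hbound n x
    · exact Filter.Eventually.of_forall fun x =>
        tendsto_const_nhds.congr' (Filter.EventuallyEq.symm (hptwise x))
  -- the integrals are eventually nonnegative
  have hev0 : ∀ᶠ n : ℕ in Filter.atTop, 0 ≤ ∫ x, Fn n x ∂ν := by
    have hall : ∀ᶠ n : ℕ in Filter.atTop, ∀ i, 0 ≤ lam i + (1/((n:ℝ)+1)) * v i := by
      rw [Filter.eventually_all]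
      intro i
      by_cases hli : lam i = 0
      · refine Filter.Eventually.of_forall fun n => ?_
        have := hT i hli
        have : (0:ℝ) ≤ (1/((n:ℝ)+1)) * v i := mul_nonneg (by positivity) this
        linarith
      · have hpos : 0 < lam i := lt_of_le_of_ne (hlam i) (Ne.symm hli)
        have hten : Filter.Tendsto (fun n : ℕ => lam i + (1/((n:ℝ)+1)) * v i)
            Filter.atTop (nhds (lam i)) := by
          have h2 : Filter.Tendsto (fun n : ℕ => (1/((n:ℝ)+1)) * v i)
              Filter.atTop (nhds 0) := by
            simpa using tendsto_one_div_add_atTop_nhds_zero_nat.mul_const (v i)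
          simpa using tendsto_const_nhds.add h2
        exact (hten.eventually (lt_mem_nhds hpos)).mono fun n hn => hn.le
    filter_upwards [hall] with n hn
    have hL := hmin _ hn
    have hint : ∫ x, Fn n x ∂ν = ((n:ℝ)+1) *
        (L ν r c (fun i => lam i + (1/((n:ℝ)+1)) * v i) C - L ν r c lam C) := by
      rw [hFn]
      simp only
      rw [integral_const_mul, integral_sub (integrable_Mx hr hc hrm hcm C _)
        (integrable_Mx hr hc hrm hcm C lam), L_eq, L_eq]
    rw [hint]
    have : (0:ℝ) ≤ (n:ℝ)+1 := by positivity
    nlinarith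
  have hg0 : 0 ≤ ∫ x, g x ∂ν := ge_of_tendsto htendsto hev0
  -- identify the limit integral
  have hgid : ∫ x, g x ∂ν = ∑ i, v i * (C i - polCost ν c π i) := by
    have hrepr : g = fun x => ∑ i, (C i - ∑ a, c x a i * π x a) * v i := by
      funext x
      rw [hg]
      simp only [slope]
      refine Finset.sum_congr rfl fun i _ => ?_
      rw [sum_selPol_mul _ _ (fun x a => c x a i) x]
    have hterm : ∀ i : Fin d, Integrable (fun x => (C i - ∑ a, c x a i * π x a) * v i) ν :=
      fun i => ((integrable_const (C i)).sub (integrable_costfun hc hcm hπ i)).mul_const _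
    rw [hrepr]
    rw [integral_finset_sum _ (fun i _ => hterm i)]
    refine Finset.sum_congr rfl fun i _ => ?_
    rw [integral_mul_const, integral_sub (integrable_const _) (integrable_costfun hc hcm hπ i)]
    simp [polCost, mul_comm]
  rw [← hgid]
  exact hg0

end Directional

section Separation

/-- Achievable "slack vectors" of policies supported on the pointwise argmax. -/
def Kset (ν : Measure X) (r : X → A → ℝ) (c : X → A → Fin d → ℝ) (C lam : Fin d → ℝ) :
    Set (Fin d → ℝ) :=
  {w | ∃ π, IsPolicy π ∧ (∀ x a, π x a ≠ 0 → phi r c C lam x a = Mx r c C lam x) ∧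
    w = fun i => C i - polCost ν c π i}

lemma abs_polCost_le_one (hc : ∀ x a i, c x a i ∈ Set.Icc (-1 : ℝ) 1)
    (hcm : ∀ a i, Measurable fun x => c x a i) {π : X → A → ℝ} (hπ : IsPolicy π) (i : Fin d) :
    |polCost ν c π i| ≤ 1 := by
  have h := norm_integral_le_of_norm_le_const (μ := ν)
    (f := fun x => ∑ a, c x a i * π x a) (C := 1) ?_
  · simpa [Real.norm_eq_abs, polCost] using h
  · refine Filter.Eventually.of_forall fun x => ?_
    rw [Real.norm_eq_abs]
    calc |∑ a, c x a i * π x a| ≤ ∑ a, |c x a i * π x a| := Finset.abs_sum_le_sum_abs _ _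
      _ ≤ ∑ a, 1 * π x a := Finset.sum_le_sum fun a _ => by
          rw [abs_mul, abs_of_nonneg (hπ.1 x a)]
          exact mul_le_mul_of_nonneg_right
            (abs_le.2 ⟨(hc x a i).1, (hc x a i).2⟩) (hπ.1 x a)
      _ = 1 := by simp only [one_mul]; exact hπ.2.1 x

lemma polCost_combo (hc : ∀ x a i, c x a i ∈ Set.Icc (-1 : ℝ) 1)
    (hcm : ∀ a i, Measurable fun x => c x a i)
    {π₁ π₂ : X → A → ℝ} (h₁ : IsPolicy π₁) (h₂ : IsPolicy π₂) (θ₁ θ₂ : ℝ) (i : Fin d) :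
    polCost ν c (fun x a => θ₁ * π₁ x a + θ₂ * π₂ x a) i
      = θ₁ * polCost ν c π₁ i + θ₂ * polCost ν c π₂ i := by
  unfold polCost
  have heq : (fun x => ∑ a, c x a i * (θ₁ * π₁ x a + θ₂ * π₂ x a))
      = fun x => θ₁ * (∑ a, c x a i * π₁ x a) + θ₂ * (∑ a, c x a i * π₂ x a) := by
    funext x
    rw [Finset.mul_sum, Finset.mul_sum, ← Finset.sum_add_distrib]
    exact Finset.sum_congr rfl fun a _ => by ring
  rw [heq, integral_add ((integrable_costfun hc hcm h₁ i).const_mul θ₁)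
    ((integrable_costfun hc hcm h₂ i).const_mul θ₂), integral_const_mul, integral_const_mul]

lemma polReward_combo (hr : ∀ x a, r x a ∈ Set.Icc (0 : ℝ) 1)
    (hrm : ∀ a, Measurable fun x => r x a)
    {π₁ π₂ : X → A → ℝ} (h₁ : IsPolicy π₁) (h₂ : IsPolicy π₂) (θ₁ θ₂ : ℝ) :
    polReward ν r (fun x a => θ₁ * π₁ x a + θ₂ * π₂ x a)
      = θ₁ * polReward ν r π₁ + θ₂ * polReward ν r π₂ := by
  unfold polReward
  have heq : (fun x => ∑ a, r x a * (θ₁ * π₁ x a + θ₂ * π₂ x a))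
      = fun x => θ₁ * (∑ a, r x a * π₁ x a) + θ₂ * (∑ a, r x a * π₂ x a) := by
    funext x
    rw [Finset.mul_sum, Finset.mul_sum, ← Finset.sum_add_distrib]
    exact Finset.sum_congr rfl fun a _ => by ring
  rw [heq, integral_add ((integrable_rewfun hr hrm h₁).const_mul θ₁)
    ((integrable_rewfun hr hrm h₂).const_mul θ₂), integral_const_mul, integral_const_mul]

lemma isPolicy_combo {π₁ π₂ : X → A → ℝ} (h₁ : IsPolicy π₁) (h₂ : IsPolicy π₂)
    {θ₁ θ₂ : ℝ} (hθ₁ : 0 ≤ θ₁) (hθ₂ : 0 ≤ θ₂) (hθ : θ₁ + θ₂ = 1) :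
    IsPolicy (fun x a => θ₁ * π₁ x a + θ₂ * π₂ x a) := by
  refine ⟨fun x a => add_nonneg (mul_nonneg hθ₁ (h₁.1 x a)) (mul_nonneg hθ₂ (h₂.1 x a)),
    fun x => ?_, fun a => ((h₁.2.2 a).const_mul θ₁).add ((h₂.2.2 a).const_mul θ₂)⟩
  rw [Finset.sum_add_distrib, ← Finset.mul_sum, ← Finset.mul_sum, h₁.2.1 x, h₂.2.1 x]
  simpa using hθ

lemma convex_Kset (hc : ∀ x a i, c x a i ∈ Set.Icc (-1 : ℝ) 1)
    (hcm : ∀ a i, Measurable fun x => c x a i) (C lam : Fin d → ℝ) :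
    Convex ℝ (Kset ν r c C lam) := by
  rintro w₁ ⟨π₁, h₁, hs₁, rfl⟩ w₂ ⟨π₂, h₂, hs₂, rfl⟩ θ₁ θ₂ hθ₁ hθ₂ hθ
  refine ⟨fun x a => θ₁ * π₁ x a + θ₂ * π₂ x a, isPolicy_combo h₁ h₂ hθ₁ hθ₂ hθ, ?_, ?_⟩
  · intro x a ha
    have hone : θ₁ * π₁ x a ≠ 0 ∨ θ₂ * π₂ x a ≠ 0 := by
      by_contra h
      push_neg at h
      exact ha (by show θ₁ * π₁ x a + θ₂ * π₂ x a = 0; rw [h.1, h.2, add_zero])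
    rcases hone with h | h
    · exact hs₁ x a (right_ne_zero_of_mul h)
    · exact hs₂ x a (right_ne_zero_of_mul h)
  · funext i
    simp only [Pi.add_apply, Pi.smul_apply, smul_eq_mul,
      polCost_combo hc hcm h₁ h₂ θ₁ θ₂ i]
    linear_combination hθ * C i

end Separation

section MainSep

lemma bounded_Kset (hc : ∀ x a i, c x a i ∈ Set.Icc (-1 : ℝ) 1)
    (hcm : ∀ a i, Measurable fun x => c x a i) (C lam : Fin d → ℝ) :
    Bornology.IsBounded (Kset ν r c C lam) := by
  rw [isBounded_iff_forall_norm_le]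
  refine ⟨1 + ∑ j, |C j|, fun w hw => ?_⟩
  obtain ⟨π, hπ, -, rfl⟩ := hw
  have h0 : (0:ℝ) ≤ 1 + ∑ j, |C j| := by positivity
  rw [pi_norm_le_iff_of_nonneg h0]
  intro i
  rw [Real.norm_eq_abs]
  have h1 : |C i - polCost ν c π i| ≤ |C i| + 1 := by
    calc |C i - polCost ν c π i| ≤ |C i| + |polCost ν c π i| := abs_sub _ _
      _ ≤ |C i| + 1 := by linarith [abs_polCost_le_one (ν := ν) hc hcm hπ i]
  have h2 : |C i| ≤ ∑ j, |C j| :=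
    Finset.single_le_sum (fun j _ => abs_nonneg (C j)) (Finset.mem_univ i)
  linarith

lemma isClosed_Fcone (lam : Fin d → ℝ) :
    IsClosed {w : Fin d → ℝ | (∀ i, 0 ≤ w i) ∧ ∑ i, lam i * w i ≤ 0} := by
  have h1 : IsClosed {w : Fin d → ℝ | ∀ i, 0 ≤ w i} := by
    have : {w : Fin d → ℝ | ∀ i, 0 ≤ w i} = ⋂ i, {w | 0 ≤ w i} := by
      ext w; simp
    rw [this]
    exact isClosed_iInter fun i => isClosed_le continuous_const (continuous_apply i)
  have h2 : IsClosed {w : Fin d → ℝ | ∑ i, lam i * w i ≤ 0} :=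
    isClosed_le (by continuity) continuous_const
  exact IsClosed.inter h1 h2

lemma convex_Fcone (lam : Fin d → ℝ) :
    Convex ℝ {w : Fin d → ℝ | (∀ i, 0 ≤ w i) ∧ ∑ i, lam i * w i ≤ 0} := by
  rintro w₁ ⟨h1, h1'⟩ w₂ ⟨h2, h2'⟩ θ₁ θ₂ hθ₁ hθ₂ hθ
  constructor
  · intro i
    simp only [Pi.add_apply, Pi.smul_apply, smul_eq_mul]
    have := h1 i; have := h2 i
    nlinarith
  · have : ∑ i, lam i * (θ₁ • w₁ + θ₂ • w₂) i
        = θ₁ * ∑ i, lam i * w₁ i + θ₂ * ∑ i, lam i * w₂ i := by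
      rw [Finset.mul_sum, Finset.mul_sum, ← Finset.sum_add_distrib]
      refine Finset.sum_congr rfl fun i _ => ?_
      simp only [Pi.add_apply, Pi.smul_apply, smul_eq_mul]
      ring
    show ∑ i, lam i * (θ₁ • w₁ + θ₂ • w₂) i ≤ 0
    rw [this]
    nlinarith

lemma exists_good_policy (hr : ∀ x a, r x a ∈ Set.Icc (0 : ℝ) 1)
    (hc : ∀ x a i, c x a i ∈ Set.Icc (-1 : ℝ) 1)
    (hrm : ∀ a, Measurable fun x => r x a)
    (hcm : ∀ a i, Measurable fun x => c x a i)
    (C lam : Fin d → ℝ) (hlam : ∀ i, 0 ≤ lam i)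
    (hmin : ∀ lam', (∀ i, 0 ≤ lam' i) → L ν r c lam C ≤ L ν r c lam' C)
    (ε : ℝ) (hε : 0 < ε) :
    ∃ π, IsPolicy π ∧ (∀ x a, π x a ≠ 0 → phi r c C lam x a = Mx r c C lam x) ∧
      (∀ i, polCost ν c π i ≤ C i + ε) ∧
      ∑ i, lam i * (C i - polCost ν c π i) ≤ ε := by
  classical
  set K := Kset ν r c C lam with hK
  set F : Set (Fin d → ℝ) := {w | (∀ i, 0 ≤ w i) ∧ ∑ i, lam i * w i ≤ 0} with hF
  -- step 1 : closure K meets F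
  have hmeet : (closure K ∩ F).Nonempty := by
    by_contra hcon
    have hdisj : Disjoint (closure K) F := by
      rw [Set.disjoint_iff_inter_eq_empty]
      exact Set.not_nonempty_iff_eq_empty.1 hcon
    obtain ⟨f, u, v', hfu, huv, hfv⟩ := geometric_hahn_banach_compact_closed
      ((convex_Kset hc hcm C lam).closure)
      ((bounded_Kset hc hcm C lam).isCompact_closure)
      (convex_Fcone lam) (isClosed_Fcone lam) hdisj
    have h0F : (0 : Fin d → ℝ) ∈ F := by
      refine ⟨fun i => le_refl 0, ?_⟩
      simp
    have hv0 : v' < 0 := by simpa using hfv 0 h0F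
    set vvec : Fin d → ℝ := fun i => f (fun j => if i = j then (1:ℝ) else 0) with hvvec
    have hlin : ∀ w : Fin d → ℝ, f w = ∑ i, w i * vvec i := by
      intro w
      conv_lhs => rw [pi_eq_sum_univ w]
      rw [map_sum]
      exact Finset.sum_congr rfl fun i _ => by rw [f.map_smul, smul_eq_mul]
    -- vvec is in the tangent cone
    have hTv : ∀ i, lam i = 0 → 0 ≤ vvec i := by
      intro i hli
      by_contra hneg
      push_neg at hneg
      obtain ⟨n, hn⟩ := exists_nat_gt (v' / vvec i)
      have hmemF : (fun j => (n:ℝ) * (if i = j then (1:ℝ) else 0)) ∈ F := by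
        constructor
        · intro j
          by_cases h : i = j <;> simp [h] <;> positivity
        · have : ∑ j, lam j * ((n:ℝ) * (if i = j then (1:ℝ) else 0))
              = (n:ℝ) * lam i := by
            rw [Finset.sum_eq_single i]
            · simp [mul_comm]
            · intro j _ hj; simp [Ne.symm hj]
            · intro h; exact absurd (Finset.mem_univ i) h
          rw [this, hli, mul_zero]
        
      have hfn : f (fun j => (n:ℝ) * (if i = j then (1:ℝ) else 0)) = (n:ℝ) * vvec i := by
        have : (fun j => (n:ℝ) * (if i = j then (1:ℝ) else 0))
            = (n:ℝ) • (fun j => (if i = j then (1:ℝ) else 0)) := by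
          funext j; simp
        rw [this, f.map_smul, smul_eq_mul, hvvec]
      have h1 := hfv _ hmemF
      rw [hfn] at h1
      have h2 : (n:ℝ) * vvec i < (v' / vvec i) * vvec i :=
        mul_lt_mul_of_neg_right hn hneg
      rw [div_mul_cancel₀ v' (ne_of_lt hneg)] at h2
      linarith
    -- contradiction with the directional-derivative lemma
    obtain ⟨π, hπ, hsupp, hdir⟩ := directional hr hc hrm hcm C lam vvec hlam hTv hmin
    have hwK : (fun i => C i - polCost ν c π i) ∈ K := ⟨π, hπ, hsupp, rfl⟩
    have h3 := hfu _ (subset_closure hwK)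
    rw [hlin] at h3
    have h4 : ∑ i, (C i - polCost ν c π i) * vvec i
        = ∑ i, vvec i * (C i - polCost ν c π i) :=
      Finset.sum_congr rfl fun i _ => mul_comm _ _
    rw [h4] at h3
    linarith
  -- step 2 : extract an approximate element of K
  obtain ⟨w₀, hw₀K, hw₀F⟩ := hmeet
  have hlamsum : (0:ℝ) ≤ ∑ i, lam i := Finset.sum_nonneg fun i _ => hlam i
  set ε' := ε / (1 + ∑ i, lam i) with hε'
  have hε'pos : 0 < ε' := by
    rw [hε']
    positivity
  obtain ⟨w, hwK, hww₀⟩ := Metric.mem_closure_iff.1 hw₀K ε' hε'pos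
  obtain ⟨π, hπ, hsupp, rfl⟩ := hwK
  refine ⟨π, hπ, hsupp, ?_, ?_⟩
  · intro i
    have h1 : dist (w₀ i) (C i - polCost ν c π i) ≤ dist w₀ (fun j => C j - polCost ν c π j) :=
      dist_le_pi_dist w₀ (fun j => C j - polCost ν c π j) i
    have h2 : |w₀ i - (C i - polCost ν c π i)| < ε' := by
      rw [← Real.dist_eq]
      exact lt_of_le_of_lt h1 hww₀
    have h3 := hw₀F.1 i
    have h4 : ε' ≤ ε := by
      rw [hε', div_le_iff₀ (by positivity)]
      nlinarith
    have := abs_lt.1 h2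
    linarith
  · have hterm : ∀ i, lam i * (C i - polCost ν c π i) ≤ lam i * w₀ i + lam i * ε' := by
      intro i
      have h1 : dist (w₀ i) (C i - polCost ν c π i) ≤ dist w₀ (fun j => C j - polCost ν c π j) :=
        dist_le_pi_dist w₀ (fun j => C j - polCost ν c π j) i
      have h2 : |w₀ i - (C i - polCost ν c π i)| < ε' := by
        rw [← Real.dist_eq]
        exact lt_of_le_of_lt h1 hww₀
      have h3 := abs_lt.1 h2
      have h4 := hlam i
      nlinarith
    calc ∑ i, lam i * (C i - polCost ν c π i) ≤ ∑ i, (lam i * w₀ i + lam i * ε') :=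
        Finset.sum_le_sum fun i _ => hterm i
      _ = (∑ i, lam i * w₀ i) + (∑ i, lam i) * ε' := by
        rw [Finset.sum_add_distrib, Finset.sum_mul]
      _ ≤ (∑ i, lam i) * ε' := by linarith [hw₀F.2]
      _ ≤ ε := by
        rw [hε', mul_comm, div_mul_eq_mul_div, div_le_iff₀ (by positivity)]
        nlinarith

end MainSep

end Aux

/-- Corollary 4 of the paper: when there exists a null-cost action and `min B > 0`,
for every `b ∈ [0, (min B)/2]`, any minimizer `λ*_{B−b·1}` of `λ ↦ L(λ, B−b·1)` over
`λ ≥ 0` satisfies `‖λ*_{B−b·1}‖ ≤ 2 (OPT(r,c,B) − OPT(r,c,0)) / min B`. -/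
theorem dual_norm_bound_null_action
    {X : Type*} [MeasurableSpace X] (ν : Measure X) [IsProbabilityMeasure ν]
    {A : Type*} [Fintype A] [Nonempty A] {d : ℕ} (hd : 0 < d)
    (r : X → A → ℝ) (c : X → A → Fin d → ℝ) (B : Fin d → ℝ) (b : ℝ)
    (hr : ∀ x a, r x a ∈ Set.Icc (0 : ℝ) 1)
    (hc : ∀ x a i, c x a i ∈ Set.Icc (-1 : ℝ) 1)
    (hrm : ∀ a, Measurable fun x => r x a)
    (hcm : ∀ a i, Measurable fun x => c x a i)
    (hBpos : 0 < minComp B)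
    (a₀ : A) (hnull : ∀ x i, c x a₀ i = 0)
    (hb0 : 0 ≤ b) (hb : b ≤ minComp B / 2)
    (lamstar : Fin d → ℝ) (hls0 : ∀ i, 0 ≤ lamstar i)
    (hmin : ∀ lam : Fin d → ℝ, (∀ i, 0 ≤ lam i) →
      L ν r c lamstar (fun i => B i - b) ≤ L ν r c lam (fun i => B i - b)) :
    enorm lamstar ≤
      2 * (OPT ν r c B - OPT ν r c (fun _ => 0)) / minComp B := by
  classical
  haveI : Nonempty (Fin d) := ⟨⟨0, hd⟩⟩
  set m := minComp B with hmdef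
  have hmB : ∀ i, m ≤ B i := fun i => ciInf_le (Set.finite_range B).bddBelow i
  set C : Fin d → ℝ := fun i => B i - b with hCdef
  have hCi : ∀ i, m / 2 ≤ C i := fun i => by
    have := hmB i
    simp only [hCdef]
    linarith
  have hCB : ∀ i, C i ≤ B i := fun i => by simp only [hCdef]; linarith
  have hmin' : ∀ lam', (∀ i, 0 ≤ lam' i) → L ν r c lamstar C ≤ L ν r c lam' C := hmin
  -- lower bound : OPT(0) + ⟨C, λ*⟩ ≤ L(λ*, C)
  have hOPT0 : OPT ν r c (fun _ => 0) + ∑ i, lamstar i * C i ≤ L ν r c lamstar C := by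
    have hnullfeas : ∀ i, polCost ν c (nullPol a₀) i ≤ (fun _ => (0:ℝ)) i := fun i => by
      rw [polCost_nullPol a₀ hnull i]
    have hne : {y : ℝ | ∃ π, IsPolicy π ∧ (∀ i, polCost ν c π i ≤ (fun _ => (0:ℝ)) i) ∧
        y = polReward ν r π}.Nonempty :=
      ⟨polReward ν r (nullPol a₀), nullPol a₀, isPolicy_nullPol a₀, hnullfeas, rfl⟩
    have hup : ∀ y ∈ {y : ℝ | ∃ π, IsPolicy π ∧ (∀ i, polCost ν c π i ≤ (fun _ => (0:ℝ)) i) ∧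
        y = polReward ν r π}, y ≤ L ν r c lamstar C - ∑ i, lamstar i * C i := by
      rintro y ⟨π, hπ, hfeas, rfl⟩
      have hwd := weak_duality (ν := ν) hr hc hrm hcm hπ C lamstar
      have hge : ∑ i, lamstar i * C i ≤ ∑ i, lamstar i * (C i - polCost ν c π i) := by
        refine Finset.sum_le_sum fun i _ => ?_
        have hf : polCost ν c π i ≤ 0 := hfeas i
        have := hls0 i
        nlinarith
      linarith
    have := csSup_le hne hup
    unfold OPT
    linarith
  -- upper bound : L(λ*, C) ≤ OPT(B)
  have hOPTB : L ν r c lamstar C ≤ OPT ν r c B := by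
    set Lv := L ν r c lamstar C with hLv
    have hseq : ∀ n : ℕ, (1 - 1/((n:ℝ)+1)) * (Lv - (m/2) * (1/((n:ℝ)+1))) ≤ OPT ν r c B := by
      intro n
      set t : ℝ := 1/((n:ℝ)+1) with htdef
      have htpos : 0 < t := by rw [htdef]; positivity
      have htle : t ≤ 1 := by
        rw [htdef, div_le_one (by positivity)]
        simp
      set ε : ℝ := (m/2) * t with hεdef
      have hεpos : 0 < ε := by
        rw [hεdef]
        have : 0 < m := hBpos
        positivity
      obtain ⟨π, hπ, hsupp, hcost, hslack⟩ :=
        exists_good_policy hr hc hrm hcm C lamstar hls0 hmin' ε hεpos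
      have hrew : Lv - ε ≤ polReward ν r π := by
        have := support_duality (ν := ν) hr hc hrm hcm hπ C lamstar hsupp
        linarith
      -- mix with the null policy
      set π' : X → A → ℝ := fun x a => (1 - t) * π x a + t * nullPol a₀ x a with hπ'def
      have hπ' : IsPolicy π' := isPolicy_combo hπ (isPolicy_nullPol a₀)
        (by linarith) htpos.le (by ring)
      have hfeas' : ∀ i, polCost ν c π' i ≤ B i := by
        intro i
        rw [hπ'def, polCost_combo hc hcm hπ (isPolicy_nullPol a₀) _ _ i,
          polCost_nullPol a₀ hnull i, mul_zero, add_zero]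
        have h1 := hcost i
        have h2 := hCi i
        have h3 := hCB i
        have h4 : 0 < m := hBpos
        nlinarith
      have hrew' : (1 - t) * (Lv - ε) ≤ polReward ν r π' := by
        rw [hπ'def, polReward_combo hr hrm hπ (isPolicy_nullPol a₀)]
        have h5 := polReward_nullPol_nonneg (ν := ν) hr a₀
        have h6 : 0 ≤ 1 - t := by linarith
        nlinarith
      calc (1 - t) * (Lv - (m/2) * t) ≤ polReward ν r π' := by rw [← hεdef]; exact hrew'
        _ ≤ OPT ν r c B := le_OPT hr hrm B hπ' hfeas'
    have hlim : Filter.Tendsto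
        (fun n : ℕ => (1 - 1/((n:ℝ)+1)) * (Lv - (m/2) * (1/((n:ℝ)+1))))
        Filter.atTop (nhds Lv) := by
      have h1 := tendsto_one_div_add_atTop_nhds_zero_nat (𝕜 := ℝ)
      have h2 : Filter.Tendsto (fun n : ℕ => 1 - 1/((n:ℝ)+1)) Filter.atTop (nhds 1) := by
        simpa using tendsto_const_nhds.sub h1
      have h3 : Filter.Tendsto (fun n : ℕ => Lv - (m/2) * (1/((n:ℝ)+1)))
          Filter.atTop (nhds Lv) := by
        have h3' : Filter.Tendsto (fun n : ℕ => Lv - (m/2) * (1/((n:ℝ)+1)))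
            Filter.atTop (nhds (Lv - (m/2) * 0)) :=
          Filter.Tendsto.sub tendsto_const_nhds (Filter.Tendsto.const_mul (m/2) h1)
        simpa using h3'
      simpa using h2.mul h3
    exact le_of_tendsto hlim (Filter.Eventually.of_forall hseq)
  -- combine
  have hkey : OPT ν r c (fun _ => 0) + (m/2) * ∑ i, lamstar i ≤ OPT ν r c B := by
    have h1 : (m/2) * ∑ i, lamstar i ≤ ∑ i, lamstar i * C i := by
      rw [Finset.mul_sum]
      refine Finset.sum_le_sum fun i _ => ?_
      have := hCi i
      have := hls0 i
      nlinarith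
    linarith
  have henorm : enorm lamstar ≤ ∑ i, lamstar i := by
    unfold enorm
    have h1 : ∑ i, (lamstar i)^2 ≤ (∑ i, lamstar i)^2 := by
      rw [sq (∑ i, lamstar i), Finset.sum_mul]
      refine Finset.sum_le_sum fun i _ => ?_
      rw [sq]
      exact mul_le_mul_of_nonneg_left
        (Finset.single_le_sum (fun j _ => hls0 j) (Finset.mem_univ i)) (hls0 i)
    calc Real.sqrt (∑ i, (lamstar i)^2) ≤ Real.sqrt ((∑ i, lamstar i)^2) :=
        Real.sqrt_le_sqrt h1
      _ = ∑ i, lamstar i := Real.sqrt_sq (Finset.sum_nonneg fun i _ => hls0 i)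
  have hm : 0 < m := hBpos
  rw [le_div_iff₀ hm]
  have h2 : enorm lamstar * m ≤ (∑ i, lamstar i) * m :=
    mul_le_mul_of_nonneg_right henorm hm.le
  nlinarith

end CBwK
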